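/- arXiv:1904.11460 — 7 statements merged into one kernel-verified Lean document; each statement's English description precedes it below -/
import Mathlib

section
/- Let G be a finite group of order n, let φ : G → {−1,1} be a map, and let H be the G×G integer matrix with entries H_{g,h} = φ(g·h). If H·Hᵀ = n·I (that is, the group-developed matrix H is a Hadamard matrix), then n is a perfect square. -/
open Matrix

/-- if the group-developed matrix `H = [φ(g·h)]` over a finite group `G`
of order `n` (with `φ` taking values in `{−1,1}`) satisfies `H·Hᵀ = n·I`, then `n` is
a perfect square. -/
theorem stmt1 {G : Type*} [Group G] [Fintype G] [DecidableEq G]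
    (φ : G → ℤ) (hpm : ∀ g, φ g = 1 ∨ φ g = -1)
    (hHad : (Matrix.of fun g h : G => φ (g * h)) * (Matrix.of fun g h : G => φ (g * h))ᵀ
        = (Fintype.card G : ℤ) • (1 : Matrix G G ℤ)) :
    IsSquare (Fintype.card G) := by
  classical
  set n : ℤ := (Fintype.card G : ℤ) with hn
  set s : ℤ := ∑ g : G, φ g with hsdef
  have hrow : ∀ k : G, ∑ h : G, φ (h * k) = s := fun k =>
    Fintype.sum_equiv (Equiv.mulRight k) _ _ (fun h => rfl)
  have hL : ∑ g : G, ∑ h : G,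
      ((Matrix.of fun g h : G => φ (g * h)) * (Matrix.of fun g h : G => φ (g * h))ᵀ) g h
      = n * (s * s) := by
    simp only [Matrix.mul_apply, Matrix.transpose_apply, Matrix.of_apply]
    calc ∑ g : G, ∑ h : G, ∑ k : G, φ (g * k) * φ (h * k)
        = ∑ g : G, ∑ k : G, ∑ h : G, φ (g * k) * φ (h * k) := by
          exact Finset.sum_congr rfl fun g _ => Finset.sum_comm
      _ = ∑ g : G, ∑ k : G, φ (g * k) * s := by
          refine Finset.sum_congr rfl fun g _ => Finset.sum_congr rfl fun k _ => ?_
          rw [← Finset.mul_sum, hrow k]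
      _ = ∑ g : G, s * s := by
          refine Finset.sum_congr rfl fun g _ => ?_
          rw [← Finset.sum_mul]
          congr 1
          exact Fintype.sum_equiv (Equiv.mulLeft g) _ _ (fun k => rfl)
      _ = n * (s * s) := by
          rw [Finset.sum_const, Finset.card_univ, nsmul_eq_mul, hn]
  have hR : ∑ g : G, ∑ h : G, (n • (1 : Matrix G G ℤ)) g h = n * n := by
    simp [Matrix.one_apply, Finset.sum_ite_eq, Finset.card_univ, mul_comm]
    exact Or.inl hn.symm
  rw [hHad] at hL
  rw [hR] at hL
  have hn0 : n ≠ 0 := by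
    simp [hn, Fintype.card_ne_zero]
  have hss : s * s = n := by
    have := mul_left_cancel₀ hn0 hL
    linarith
  refine ⟨s.natAbs, ?_⟩
  have h3 : ((s.natAbs * s.natAbs : ℕ) : ℤ) = ((Fintype.card G : ℕ) : ℤ) :=
    (Int.natAbs_mul_self).trans hss
  exact (Nat.cast_injective h3).symm
end

section
/- Let p > 3 be a prime, let G be a group of order 4p, and let ψ be a 2-cocycle on G with values in ⟨±1⟩ such that the G×G matrix [ψ(g,h)]_{g,h∈G} is a Hadamard matrix. Let (E, z, σ) be a realization of the central extension E_ψ (so E has order 8p). Then no Sylow 2-subgroup of E is cyclic, and no Sylow 2-subgroup of E is isomorphic to the dihedral group of order 8. -/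
open Matrix

/-- Entries of a matrix are all ±1. -/
def IsPM {m n : Type*} (A : Matrix m n ℤ) : Prop := ∀ i j, A i j = 1 ∨ A i j = -1

/-- A Hadamard matrix: ±1 entries and `H·Hᵀ = n·I`. -/
def IsHadamard {n : Type*} [Fintype n] [DecidableEq n] (H : Matrix n n ℤ) : Prop :=
  IsPM H ∧ H * Hᵀ = (Fintype.card n : ℤ) • (1 : Matrix n n ℤ)

set_option maxRecDepth 40000

private lemma locCyc : ∀ f : ZMod 8 → ZMod 2, (∀ k, f (k + 4) = f k + 1) →
    ((Finset.univ.filter fun k => f k = 0 ∧ f (k+1) = 0).card) % 2 = 1 := by decide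

private lemma locDih : ∀ f : DihedralGroup 4 → ZMod 2,
    (∀ w, f (DihedralGroup.r 2 * w) = f w + 1) →
    (((Finset.univ.filter fun w => f w = 0 ∧ f (w * DihedralGroup.sr 0) = 0).card) +
     ((Finset.univ.filter fun w => f w = 0 ∧ f (w * DihedralGroup.sr 1) = 0).card)) % 4 = 2 := by
  decide

private lemma zmod2_ne : ¬((1 : ZMod 2) = 2) := by decide

private lemma zmod4_ne : ¬((0 : ZMod 4) = 2) := by decide

private lemma dih_central : ∀ w : DihedralGroup 4, (∀ v, v * w = w * v) → w ^ 2 = 1 →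
    w = 1 ∨ w = DihedralGroup.r 2 := by decide

private lemma card_filter_prod {I K F : Type*} [Fintype I] [Fintype K] [Fintype F]
    [DecidableEq I] (β : I × K → F) (hβ : Function.Bijective β) (A : F → Prop)
    [DecidablePred A] :
    (Finset.univ.filter fun y => A y).card
      = ∑ i : I, (Finset.univ.filter fun k => A (β (i, k))).card := by
  classical
  have h1 : (Finset.univ.filter fun y => A y)
      = (Finset.univ.filter fun ik : I × K => A (β ik)).image β := by
    ext y
    simp only [Finset.mem_filter, Finset.mem_image, Finset.mem_univ, true_and]
    constructor
    · intro hy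
      obtain ⟨ik, rfl⟩ := hβ.surjective y
      exact ⟨ik, hy, rfl⟩
    · rintro ⟨ik, h, rfl⟩; exact h
  rw [h1, Finset.card_image_of_injective _ hβ.injective,
    Finset.card_eq_sum_card_fiberwise (f := fun ik : I × K => ik.1) (t := Finset.univ)
      (fun _ _ => Finset.mem_univ _)]
  refine Finset.sum_congr rfl fun i _ => ?_
  refine (Finset.card_bij (fun k _ => ((i, k) : I × K)) ?_ ?_ ?_).symm
  · intro k hk
    simp only [Finset.mem_filter, Finset.mem_univ, true_and] at hk ⊢
    exact ⟨hk, trivial⟩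
  · intro a _ b _ hab
    exact (Prod.mk.injEq _ _ _ _ ▸ hab).2
  · rintro ⟨i', k⟩ h
    simp only [Finset.mem_filter, Finset.mem_univ, true_and] at h
    obtain ⟨hA, hi⟩ := h
    subst hi
    exact ⟨k, by simpa using hA, rfl⟩

/-- if `p > 3` is prime, `G` a group of order `4p`, `ψ` a 2-cocycle on `G`
with values in `{±1}` such that `[ψ(g,h)]` is a Hadamard matrix, and `(E,z,σ)` is a
realization of the central extension `E_ψ`, then no Sylow 2-subgroup of `E` is cyclic
and none is isomorphic to the dihedral group of order 8. -/
theorem stmt2 (p : ℕ) (hp : p.Prime) (hp3 : 3 < p)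
    {G : Type*} [Group G] [Fintype G] [DecidableEq G] (hG : Fintype.card G = 4 * p)
    (ψ : G → G → ℤ)
    (hψpm : ∀ g h, ψ g h = 1 ∨ ψ g h = -1)
    (hψ1r : ∀ g, ψ g 1 = 1) (hψ1l : ∀ g, ψ 1 g = 1)
    (hψcoc : ∀ g h k, ψ g (h * k) * ψ h k = ψ g h * ψ (g * h) k)
    (hHad : _root_.IsHadamard (Matrix.of fun g h => ψ g h))
    {E : Type*} [Group E] [Fintype E]
    (z : E) (hzc : z ∈ Subgroup.center E) (hz1 : z ≠ 1) (hz2 : z ^ 2 = 1)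
    (σ : G → E) (hσ1 : σ 1 = 1)
    (hbij : Function.Bijective fun gi : G × ZMod 2 => σ gi.1 * z ^ (gi.2.val))
    (hmul1 : ∀ g h, ψ g h = 1 → σ g * σ h = σ (g * h))
    (hmul2 : ∀ g h, ψ g h = -1 → σ g * σ h = σ (g * h) * z) :
    ∀ P : Sylow 2 E, ¬ IsCyclic (P : Subgroup E) ∧
      ¬ Nonempty ((P : Subgroup E) ≃* DihedralGroup 4) := by
  classical
  intro P
  have hp2 : p % 2 = 1 := Nat.odd_iff.mp (hp.odd_of_ne_two (by omega))
  have hcardE : Fintype.card E = 8 * p := by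
    have h1 := (Fintype.card_of_bijective hbij).symm
    simp only [Fintype.card_prod, ZMod.card] at h1
    omega
  -- inverse of the bijection
  obtain ⟨binv, hbl, hbr⟩ := Function.bijective_iff_has_inverse.mp hbij
  set δ : E → ZMod 2 := fun x => (binv x).2 with hδdef
  set π : E → G := fun x => (binv x).1 with hπdef
  have hrecon : ∀ x : E, σ (π x) * z ^ (δ x).val = x := fun x => hbr x
  have hδσ : ∀ (g : G) (i : ZMod 2), δ (σ g * z ^ i.val) = i := fun g i =>
    congrArg Prod.snd (hbl (g, i))
  have hπσ : ∀ (g : G) (i : ZMod 2), π (σ g * z ^ i.val) = g := fun g i =>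
    congrArg Prod.fst (hbl (g, i))
  have hδσ0 : ∀ g : G, δ (σ g) = 0 := by
    intro g
    have := hδσ g 0
    simpa using this
  have hπσ0 : ∀ g : G, π (σ g) = g := by
    intro g
    have := hπσ g 0
    simpa using this
  have hσinj : Function.Injective σ := by
    intro a b hab
    rw [← hπσ0 a, ← hπσ0 b, hab]
  have hzcomm : ∀ y : E, y * z = z * y := fun y => Subgroup.mem_center_iff.mp hzc y
  have hzpow2 : ∀ a : ℕ, z ^ a = z ^ (a % 2) := by
    intro a
    conv_lhs => rw [← Nat.div_add_mod a 2]
    rw [pow_add, pow_mul, hz2, one_pow, one_mul]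
  have hzval : ∀ i j : ZMod 2, z ^ i.val * z ^ j.val = z ^ (i + j).val := by
    intro i j
    rw [← pow_add, ZMod.val_add, ← hzpow2]
  have hval1 : (1 : ZMod 2).val = 1 := rfl
  have hδz : ∀ y : E, δ (z * y) = δ y + 1 := by
    intro y
    have h1 : z * y = σ (π y) * z ^ ((δ y) + 1).val := by
      conv_lhs => rw [← hrecon y]
      rw [← hzcomm, mul_assoc, ← hzval (δ y) 1, hval1, pow_one]
    rw [h1, hδσ]
  -- the cocycle exponent
  have hε : ∃ ε : G → G → ZMod 2, ∀ g h,
      σ g * σ h = σ (g * h) * z ^ (ε g h).val ∧ (ε g h = 0 ↔ ψ g h = 1) := by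
    refine ⟨fun g h => if ψ g h = 1 then 0 else 1, fun g h => ?_⟩
    by_cases hcase : ψ g h = 1
    · simp only [hcase, if_pos]
      refine ⟨by rw [hmul1 g h hcase]; simp, by simp⟩
    · have hm : ψ g h = -1 := (hψpm g h).resolve_left hcase
      simp only [if_neg hcase]
      constructor
      · rw [hmul2 g h hm, hval1, pow_one]
      · simp [hcase]
  obtain ⟨ε, hεspec⟩ := hε
  have hδmulσ : ∀ (h : G) (y : E),
      δ (σ h * y) = ε h (π y) + δ y ∧ π (σ h * y) = h * π y := by
    intro h y
    have h1 : σ h * y = σ (h * π y) * z ^ (ε h (π y) + δ y).val := by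
      conv_lhs => rw [← hrecon y]
      rw [← mul_assoc, (hεspec h (π y)).1, mul_assoc, hzval]
    exact ⟨by rw [h1, hδσ], by rw [h1, hπσ]⟩
  -- column sums of the Hadamard matrix vanish
  have hcol : ∀ a : G, a ≠ 1 → ∑ g : G, ψ g a = 0 := by
    intro a ha
    have hH2 := hHad.2
    set Hq : Matrix G G ℚ := Matrix.of (fun g h => (ψ g h : ℚ)) with hHqdef
    have hmapH : (Matrix.of fun g h => ψ g h).map (Int.castRingHom ℚ) = Hq := rfl
    have hq : Hq * Hqᵀ = (Fintype.card G : ℚ) • 1 := by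
      have hmap := congrArg (fun M : Matrix G G ℤ => M.map (Int.castRingHom ℚ)) hH2
      simp only [Matrix.map_mul, Matrix.transpose_map, hmapH] at hmap
      ext i j
      have hmape := congrFun (congrFun hmap i) j
      simp only [Matrix.map_apply, Matrix.smul_apply, Matrix.one_apply, smul_eq_mul] at hmape ⊢
      rw [hmape]
      split_ifs <;> simp
    have hne : (Fintype.card G : ℚ) ≠ 0 := by
      rw [hG]
      positivity
    have h3 : Hq * ((Fintype.card G : ℚ)⁻¹ • Hqᵀ) = 1 := by
      rw [Matrix.mul_smul, hq, smul_smul, inv_mul_cancel₀ hne, one_smul]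
    have h4 := mul_eq_one_comm.mp h3
    have h5 : Hqᵀ * Hq = (Fintype.card G : ℚ) • 1 := by
      calc Hqᵀ * Hq = (Fintype.card G : ℚ) • (((Fintype.card G : ℚ)⁻¹ • Hqᵀ) * Hq) := by
            rw [Matrix.smul_mul, smul_smul, mul_inv_cancel₀ hne, one_smul]
        _ = (Fintype.card G : ℚ) • 1 := by rw [h4]
    have h6 := congrFun (congrFun h5 1) a
    simp only [Matrix.mul_apply, Matrix.transpose_apply, Matrix.smul_apply, Matrix.one_apply,
      Matrix.of_apply, smul_eq_mul, hHqdef] at h6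
    rw [if_neg (fun hh => ha hh.symm), mul_zero] at h6
    have h7 : ∑ g : G, ((ψ g a : ℚ)) = 0 := by
      rw [← h6]
      refine Finset.sum_congr rfl fun g _ => ?_
      rw [hψ1r g]
      norm_num
    exact_mod_cast h7
  -- counting: each nontrivial column has 2p entries of each sign
  have hcount : ∀ a : G, a ≠ 1 → ∀ i : ZMod 2,
      (Finset.univ.filter fun h : G => ε h a = i).card = 2 * p := by
    intro a ha i
    have hpos : (Finset.univ.filter fun h : G => ψ h a = 1).card = 2 * p := by
      have hsplit := Finset.sum_filter_add_sum_filter_not Finset.univ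
        (fun h : G => ψ h a = 1) (fun h : G => ψ h a)
      rw [hcol a ha] at hsplit
      have h1 : ∑ h ∈ Finset.univ.filter (fun h : G => ψ h a = 1), ψ h a
          = ((Finset.univ.filter fun h : G => ψ h a = 1).card : ℤ) := by
        rw [Finset.sum_congr rfl (fun h hh => (Finset.mem_filter.mp hh).2)]
        simp
      have h2 : ∑ h ∈ Finset.univ.filter (fun h : G => ¬ψ h a = 1), ψ h a
          = -((Finset.univ.filter fun h : G => ¬ψ h a = 1).card : ℤ) := by
        rw [Finset.sum_congr rfl (fun h hh => ((hψpm h a).resolve_left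
          (Finset.mem_filter.mp hh).2 : ψ h a = -1))]
        simp
      have h3 := Finset.card_filter_add_card_filter_not
        (s := (Finset.univ : Finset G)) (p := fun h : G => ψ h a = 1)
      rw [Finset.card_univ, hG] at h3
      rw [h1, h2] at hsplit
      omega
    have hflt : ∀ j : ZMod 2, j = 0 ∨ j = 1 := by decide
    rcases hflt i with rfl | rfl
    · rw [← hpos]
      apply Finset.card_nbij id
      · intro h hh
        simp only [Finset.mem_coe, Finset.mem_filter, Finset.mem_univ, true_and] at hh ⊢
        exact ((hεspec h a).2).mp hh
      · exact fun x _ y _ h => h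
      · intro h hh
        simp only [Finset.mem_coe, Finset.mem_filter, Finset.mem_univ, true_and,
          Set.mem_image] at hh ⊢
        exact ⟨h, by simpa using ((hεspec h a).2).mpr hh, rfl⟩
    · have hii : ∀ h : G, (ε h a = 1) ↔ ¬(ε h a = 0) := by
        intro h
        constructor
        · intro h1 h0
          rw [h1] at h0
          exact absurd h0 (by decide)
        · intro h0
          rcases hflt (ε h a) with h' | h'
          · exact absurd h' h0
          · exact h'
      have hneg : (Finset.univ.filter fun h : G => ε h a = 1).card
          = 4 * p - (Finset.univ.filter fun h : G => ε h a = 0).card := by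
        have h3 := Finset.card_filter_add_card_filter_not
          (s := (Finset.univ : Finset G)) (p := fun h : G => ε h a = 0)
        rw [Finset.card_univ, hG] at h3
        have h4 : (Finset.univ.filter fun h : G => ¬(ε h a = 0)).card
            = (Finset.univ.filter fun h : G => ε h a = 1).card := by
          refine congrArg Finset.card (Finset.filter_congr ?_)
          intro h _
          simp [hii h]
        omega
      have h0eq : (Finset.univ.filter fun h : G => ε h a = 0).card = 2 * p := by
        rw [← hpos]
        apply Finset.card_nbij id
        · intro h hh
          simp only [Finset.mem_coe, Finset.mem_filter, Finset.mem_univ, true_and] at hh ⊢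
          exact ((hεspec h a).2).mp hh
        · exact fun x _ y _ h => h
        · intro h hh
          simp only [Finset.mem_coe, Finset.mem_filter, Finset.mem_univ, true_and,
            Set.mem_image] at hh ⊢
          exact ⟨h, by simpa using ((hεspec h a).2).mpr hh, rfl⟩
      rw [hneg, h0eq]
      omega
  -- the key difference-set count
  have hN : ∀ e : E, π e ≠ 1 →
      (Finset.univ.filter fun y : E => δ y = 0 ∧ δ (y * e) = 0).card = 2 * p := by
    intro e he
    have hcnt := hcount (π e) he (-(δ e))
    have key : (Finset.univ.filter fun h : G => ε h (π e) = -(δ e)).card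
        = (Finset.univ.filter fun y : E => δ y = 0 ∧ δ (y * e) = 0).card := by
      apply Finset.card_nbij (fun h => σ h)
      · intro h hh
        simp only [Finset.mem_coe, Finset.mem_filter, Finset.mem_univ, true_and] at hh ⊢
        refine ⟨hδσ0 h, ?_⟩
        rw [(hδmulσ h e).1, hh]
        exact neg_add_cancel _
      · exact fun a _ b _ h => hσinj h
      · intro y hy
        simp only [Finset.mem_coe, Finset.mem_filter, Finset.mem_univ, true_and,
          Set.mem_image] at hy ⊢
        obtain ⟨hy0, hy1⟩ := hy
        have hyσ : σ (π y) = y := by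
          have := hrecon y
          rwa [hy0, ZMod.val_zero, pow_zero, mul_one] at this
        refine ⟨π y, ?_, hyσ⟩
        have h2 := (hδmulσ (π y) e).1
        rw [hyσ, hy1] at h2
        rw [eq_comm, neg_eq_iff_add_eq_zero, add_comm]
        exact h2.symm
    rw [← key]
    exact hcnt
  have hπne : ∀ e : E, e ≠ 1 → e ≠ z → π e ≠ 1 := by
    intro e h1 hzz heq
    have hre := hrecon e
    rw [heq, hσ1, one_mul] at hre
    have hv : (δ e).val = 0 ∨ (δ e).val = 1 := by
      have := (δ e).val_lt
      omega
    rcases hv with hv | hv <;> rw [hv] at hre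
    · rw [pow_zero] at hre
      exact h1 hre.symm
    · rw [pow_one] at hre
      exact hzz hre.symm
  haveI hfact2 : Fact (Nat.Prime 2) := ⟨Nat.prime_two⟩
  have hordz : orderOf z = 2 := orderOf_eq_prime hz2 hz1
  have hP8 : Nat.card (P : Subgroup E) = 8 := by
    have h := Sylow.card_eq_multiplicity P
    have hcE : Nat.card E = 8 * p := by rw [Nat.card_eq_fintype_card, hcardE]
    rw [hcE] at h
    have hfac : (8 * p).factorization 2 = 3 := by
      rw [Nat.factorization_mul (by norm_num) hp.ne_zero]
      have h8 : (8 : ℕ).factorization 2 = 3 := by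
        rw [show (8 : ℕ) = 2 ^ 3 from rfl, Nat.Prime.factorization_pow Nat.prime_two]
        simp
      have hpf : p.factorization 2 = 0 := by
        rw [hp.factorization]
        exact Finsupp.single_eq_of_ne (by omega)
      simp [h8, hpf]
    rw [hfac] at h
    norm_num at h
    rw [Nat.card_eq_fintype_card]
    exact h
  have hzP : z ∈ (P : Subgroup E) := by
    have hzpg : IsPGroup 2 (Subgroup.zpowers z) := by
      apply IsPGroup.of_card (n := 1)
      rw [Nat.card_zpowers, hordz, pow_one]
    haveI hnormal : (Subgroup.zpowers z).Normal := by
      constructor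
      intro n hn g
      obtain ⟨k, rfl⟩ := Subgroup.mem_zpowers_iff.mp hn
      have hc : z ^ k ∈ Subgroup.center E := Subgroup.zpow_mem _ hzc k
      have : g * z ^ k * g⁻¹ = z ^ k := by
        rw [Subgroup.mem_center_iff.mp hc g, mul_assoc, mul_inv_cancel, mul_one]
      rwa [this]
    have hsup : IsPGroup 2 ↥((P : Subgroup E) ⊔ Subgroup.zpowers z) :=
      IsPGroup.to_sup_of_normal_right P.isPGroup' hzpg
    have heq : (P : Subgroup E) ⊔ Subgroup.zpowers z = P := P.is_maximal' hsup le_sup_left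
    rw [← heq]
    exact (le_sup_right : Subgroup.zpowers z ≤ _) (Subgroup.mem_zpowers z)
  constructor
  · -- no cyclic Sylow 2-subgroup
    intro hC
    obtain ⟨g, hg⟩ := @IsCyclic.exists_generator _ _ hC
    have hordg : orderOf g = 8 := by
      have h1 := orderOf_eq_card_of_forall_mem_zpowers hg
      rw [h1, hP8]
    have hordt : orderOf ((g : E)) = 8 := by rw [Subgroup.orderOf_coe, hordg]
    set t : E := (g : E) with htdef
    have hz2' : z ^ (2 : ℤ) = 1 := by
      rw [show (2 : ℤ) = ((2 : ℕ) : ℤ) from rfl, zpow_natCast, hz2]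
    have hz4 : z = t ^ 4 := by
      obtain ⟨k, hk⟩ := hg ⟨z, hzP⟩
      have hk' : t ^ k = z := by
        have := congrArg (Subgroup.subtype (P : Subgroup E)) hk
        simpa using this
      have h2k : t ^ (2 * k) = 1 := by
        rw [show (2 : ℤ) * k = k * 2 by ring, _root_.zpow_mul, hk', hz2']
      have hdvd : (8 : ℤ) ∣ 2 * k := by
        have := (orderOf_dvd_iff_zpow_eq_one (x := t)).mpr h2k
        rwa [hordt] at this
      obtain ⟨m, hm⟩ : (4 : ℤ) ∣ k := by omega
      have hw2 : (t ^ (4 : ℕ)) ^ (2 : ℤ) = 1 := by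
        rw [show ((2:ℤ)) = ((2:ℕ) : ℤ) from rfl, zpow_natCast, ← pow_mul,
          show 4 * 2 = 8 from rfl, ← hordt]
        exact pow_orderOf_eq_one t
      have hz4m : z = (t ^ (4 : ℕ)) ^ m := by
        rw [← hk', hm, _root_.zpow_mul]
        norm_cast
      rcases Int.even_or_odd m with ⟨j, hj⟩ | ⟨j, hj⟩
      · exfalso
        apply hz1
        rw [hz4m, hj, show j + j = 2 * j by ring, _root_.zpow_mul, hw2, _root_.one_zpow]
      · rw [hz4m, hj, _root_.zpow_add, _root_.zpow_mul, hw2, _root_.one_zpow, one_mul, _root_.zpow_one]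
    set T := Subgroup.zpowers t with hTdef
    letI : Fintype (E ⧸ T) := Fintype.ofFinite _
    have hTcard : Nat.card T = 8 := by rw [hTdef, Nat.card_zpowers, hordt]
    have hQp : Fintype.card (E ⧸ T) = p := by
      have h1 := Subgroup.card_eq_card_quotient_mul_card_subgroup T
      rw [hTcard, Nat.card_eq_fintype_card (α := E), hcardE,
        Nat.card_eq_fintype_card (α := E ⧸ T)] at h1
      omega
    set β : (E ⧸ T) × ZMod 8 → E := fun ik => ik.1.out * t ^ (ik.2.val) with hβdef
    have hmemT : ∀ j : ZMod 8, t ^ j.val ∈ T := fun j => Subgroup.npow_mem_zpowers t j.val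
    have hβinj : Function.Injective β := by
      rintro ⟨q, k⟩ ⟨q', k'⟩ hE
      simp only [hβdef] at hE
      have hq : q = q' := by
        have h1 : QuotientGroup.mk (q.out * t ^ k.val) = q := by
          rw [QuotientGroup.mk_mul_of_mem _ (hmemT k)]
          exact q.out_eq'
        have h2 : QuotientGroup.mk (q'.out * t ^ k'.val) = q' := by
          rw [QuotientGroup.mk_mul_of_mem _ (hmemT k')]
          exact q'.out_eq'
        rw [← h1, ← h2, hE]
      subst hq
      have hk : t ^ k.val = t ^ k'.val := mul_left_cancel hE
      have hkk : k.val = k'.val := by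
        refine pow_injOn_Iio_orderOf ?_ ?_ hk
        · simp only [Set.mem_Iio, hordt]
          exact k.val_lt
        · simp only [Set.mem_Iio, hordt]
          exact k'.val_lt
      exact Prod.ext rfl (ZMod.val_injective 8 hkk)
    have hβbij : Function.Bijective β := by
      rw [Fintype.bijective_iff_injective_and_card]
      refine ⟨hβinj, ?_⟩
      rw [Fintype.card_prod, hQp, ZMod.card, hcardE]
      ring
    have ht1 : t ≠ 1 := by
      intro h
      rw [h, orderOf_one] at hordt
      omega
    have htz : t ≠ z := by
      intro h
      rw [h, hordz] at hordt
      omega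
    have hNt := hN t (hπne t ht1 htz)
    have hdecomp := card_filter_prod β hβbij (fun y => δ y = 0 ∧ δ (y * t) = 0)
    have hstep : ∀ (q : E ⧸ T) (k : ZMod 8), β (q, k) * t = β (q, k + 1) := by
      intro q k
      simp only [hβdef]
      rw [mul_assoc, ← pow_succ]
      congr 1
      refine (pow_eq_pow_iff_modEq).mpr ?_
      rw [hordt, ZMod.val_add, show (1 : ZMod 8).val = 1 from rfl]
      exact (Nat.mod_modEq _ 8).symm
    have hper : ∀ q : E ⧸ T,
        (Finset.univ.filter fun k : ZMod 8 =>
          δ (β (q, k)) = 0 ∧ δ (β (q, k) * t) = 0).card % 2 = 1 := by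
      intro q
      have hconstr : ∀ k : ZMod 8, δ (β (q, k + 4)) = δ (β (q, k)) + 1 := by
        intro k
        have hpow : t ^ ((k + 4).val) = t ^ (k.val + 4) := by
          refine (pow_eq_pow_iff_modEq).mpr ?_
          rw [hordt, ZMod.val_add, show (4 : ZMod 8).val = 4 from rfl]
          exact (Nat.mod_modEq _ 8)
        have hzb : β (q, k + 4) = z * β (q, k) := by
          simp only [hβdef]
          rw [hpow, pow_add, ← mul_assoc, show t ^ 4 = z from hz4.symm, hzcomm]
        rw [hzb, hδz]
      have hfeq : (Finset.univ.filter fun k : ZMod 8 =>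
            δ (β (q, k)) = 0 ∧ δ (β (q, k) * t) = 0)
          = (Finset.univ.filter fun k : ZMod 8 =>
            δ (β (q, k)) = 0 ∧ δ (β (q, k + 1)) = 0) := by
        refine Finset.filter_congr fun k _ => ?_
        rw [hstep q k]
      rw [hfeq]
      exact locCyc (fun k => δ (β (q, k))) hconstr
    rw [hdecomp] at hNt
    beta_reduce at hNt
    have hmod := congrArg (fun n : ℕ => (n : ZMod 2)) hNt
    simp only [Nat.cast_sum, Nat.cast_mul, Nat.cast_ofNat] at hmod
    have hone : ∀ q : E ⧸ T, (((Finset.univ.filter fun k : ZMod 8 =>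
        δ (β (q, k)) = 0 ∧ δ (β (q, k) * t) = 0).card : ℕ) : ZMod 2) = 1 := by
      intro q
      rw [← ZMod.natCast_mod, hper q, Nat.cast_one]
    rw [Finset.sum_congr rfl (fun q _ => hone q), Finset.sum_const, Finset.card_univ,
      hQp, nsmul_eq_mul, mul_one] at hmod
    have hp1 : ((p : ℕ) : ZMod 2) = 1 := by
      rw [← ZMod.natCast_mod, hp2, Nat.cast_one]
    rw [hp1, mul_one] at hmod
    exact absurd hmod zmod2_ne
  · rintro ⟨iso⟩
    set ι : DihedralGroup 4 → E := fun w => ((iso.symm w : ↥(P : Subgroup E)) : E) with hιdef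
    have hιmul : ∀ w w', ι (w * w') = ι w * ι w' := by
      intro w w'
      simp only [hιdef, _root_.map_mul, Subgroup.coe_mul]
    have hιinj : Function.Injective ι := by
      intro a b hab
      exact iso.symm.injective (Subtype.coe_injective hab)
    have hι1 : ι 1 = 1 := by
      simp only [hιdef, _root_.map_one, Subgroup.coe_one]
    have hζ : iso ⟨z, hzP⟩ = DihedralGroup.r 2 := by
      have hcen : ∀ v, v * iso ⟨z, hzP⟩ = iso ⟨z, hzP⟩ * v := by
        intro v
        have hv : v = iso (iso.symm v) := (iso.apply_symm_apply v).symm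
        rw [hv, ← _root_.map_mul, ← _root_.map_mul]
        congr 1
        ext
        exact hzcomm _
      have hsq : iso ⟨z, hzP⟩ ^ 2 = 1 := by
        rw [← _root_.map_pow]
        have h2 : (⟨z, hzP⟩ : ↥(P : Subgroup E)) ^ 2 = 1 := by
          ext
          exact hz2
        rw [h2, _root_.map_one]
      rcases dih_central (iso ⟨z, hzP⟩) hcen hsq with h | h
      · exfalso
        apply hz1
        have h1 : (⟨z, hzP⟩ : ↥(P : Subgroup E)) = 1 := by
          apply iso.injective
          rw [h, _root_.map_one]
        exact congrArg Subtype.val h1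
      · exact h
    have hιz : ι (DihedralGroup.r 2) = z := by
      simp only [hιdef, ← hζ, MulEquiv.symm_apply_apply]
    letI : Fintype (E ⧸ (P : Subgroup E)) := Fintype.ofFinite _
    have hQp : Fintype.card (E ⧸ (P : Subgroup E)) = p := by
      have h1 := Subgroup.card_eq_card_quotient_mul_card_subgroup (P : Subgroup E)
      rw [hP8, Nat.card_eq_fintype_card (α := E), hcardE,
        Nat.card_eq_fintype_card (α := E ⧸ (P : Subgroup E))] at h1
      omega
    have hmemP : ∀ w, ι w ∈ (P : Subgroup E) := fun w => (iso.symm w).2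
    set β : (E ⧸ (P : Subgroup E)) × DihedralGroup 4 → E := fun ik => ik.1.out * ι ik.2
      with hβdef
    have hβinj : Function.Injective β := by
      rintro ⟨q, w⟩ ⟨q', w'⟩ hE
      simp only [hβdef] at hE
      have hq : q = q' := by
        have h1 : QuotientGroup.mk (q.out * ι w) = q := by
          rw [QuotientGroup.mk_mul_of_mem _ (hmemP w)]
          exact q.out_eq'
        have h2 : QuotientGroup.mk (q'.out * ι w') = q' := by
          rw [QuotientGroup.mk_mul_of_mem _ (hmemP w')]
          exact q'.out_eq'
        rw [← h1, ← h2, hE]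
      subst hq
      exact Prod.ext rfl (hιinj (mul_left_cancel hE))
    have hβbij : Function.Bijective β := by
      rw [Fintype.bijective_iff_injective_and_card]
      refine ⟨hβinj, ?_⟩
      rw [Fintype.card_prod, hQp, DihedralGroup.card, hcardE]
      ring
    have hβmul : ∀ (q : E ⧸ (P : Subgroup E)) (w w' : DihedralGroup 4),
        β (q, w) * ι w' = β (q, w * w') := by
      intro q w w'
      simp only [hβdef, hιmul, mul_assoc]
    have hconstr : ∀ (q : E ⧸ (P : Subgroup E)) (w : DihedralGroup 4),
        δ (β (q, DihedralGroup.r 2 * w)) = δ (β (q, w)) + 1 := by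
      intro q w
      have h1 : β (q, DihedralGroup.r 2 * w) = z * β (q, w) := by
        simp only [hβdef, hιmul, hιz]
        rw [← mul_assoc, hzcomm q.out, mul_assoc]
      rw [h1, hδz]
    have hd1 : ∀ j : ZMod 4, DihedralGroup.sr j ≠ 1 := by decide
    have hd2 : ∀ j : ZMod 4, DihedralGroup.sr j ≠ DihedralGroup.r 2 := by decide
    have hsrne : ∀ j : ZMod 4, π (ι (DihedralGroup.sr j)) ≠ 1 := by
      intro j
      apply hπne
      · intro h
        exact absurd (hιinj (h.trans hι1.symm)) (hd1 j)
      · intro h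
        exact absurd (hιinj (h.trans hιz.symm)) (hd2 j)
    have hN0 := hN (ι (DihedralGroup.sr 0)) (hsrne 0)
    have hN1 := hN (ι (DihedralGroup.sr 1)) (hsrne 1)
    have hdec0 := card_filter_prod β hβbij
      (fun y => δ y = 0 ∧ δ (y * ι (DihedralGroup.sr 0)) = 0)
    have hdec1 := card_filter_prod β hβbij
      (fun y => δ y = 0 ∧ δ (y * ι (DihedralGroup.sr 1)) = 0)
    rw [hdec0] at hN0
    rw [hdec1] at hN1
    beta_reduce at hN0 hN1
    have hfeq : ∀ (q : E ⧸ (P : Subgroup E)) (j : ZMod 4),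
        (Finset.univ.filter fun w : DihedralGroup 4 =>
          δ (β (q, w)) = 0 ∧ δ (β (q, w) * ι (DihedralGroup.sr j)) = 0)
        = (Finset.univ.filter fun w : DihedralGroup 4 =>
          δ (β (q, w)) = 0 ∧ δ (β (q, w * DihedralGroup.sr j)) = 0) := by
      intro q j
      refine Finset.filter_congr fun w _ => ?_
      rw [hβmul q w (DihedralGroup.sr j)]
    have hper : ∀ q : E ⧸ (P : Subgroup E),
        ((Finset.univ.filter fun w : DihedralGroup 4 =>
          δ (β (q, w)) = 0 ∧ δ (β (q, w) * ι (DihedralGroup.sr 0)) = 0).card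
        + (Finset.univ.filter fun w : DihedralGroup 4 =>
          δ (β (q, w)) = 0 ∧ δ (β (q, w) * ι (DihedralGroup.sr 1)) = 0).card) % 4 = 2 := by
      intro q
      rw [hfeq q 0, hfeq q 1]
      exact locDih (fun w => δ (β (q, w))) (hconstr q)
    have htot : (∑ q : E ⧸ (P : Subgroup E),
        ((Finset.univ.filter fun w : DihedralGroup 4 =>
          δ (β (q, w)) = 0 ∧ δ (β (q, w) * ι (DihedralGroup.sr 0)) = 0).card
        + (Finset.univ.filter fun w : DihedralGroup 4 =>
          δ (β (q, w)) = 0 ∧ δ (β (q, w) * ι (DihedralGroup.sr 1)) = 0).card)) = 4 * p := by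
      rw [Finset.sum_add_distrib, hN0, hN1]
      omega
    have hmod := congrArg (fun n : ℕ => (n : ZMod 4)) htot
    simp only [Nat.cast_sum] at hmod
    have htwo : ∀ q : E ⧸ (P : Subgroup E),
        ((((Finset.univ.filter fun w : DihedralGroup 4 =>
          δ (β (q, w)) = 0 ∧ δ (β (q, w) * ι (DihedralGroup.sr 0)) = 0).card
        + (Finset.univ.filter fun w : DihedralGroup 4 =>
          δ (β (q, w)) = 0 ∧ δ (β (q, w) * ι (DihedralGroup.sr 1)) = 0).card) : ℕ) : ZMod 4)
        = 2 := by
      intro q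
      rw [← ZMod.natCast_mod, hper q]
      rfl
    rw [Finset.sum_congr rfl (fun q _ => htwo q), Finset.sum_const, Finset.card_univ,
      hQp, nsmul_eq_mul] at hmod
    have hp4 : p % 4 = 1 ∨ p % 4 = 3 := by omega
    have hcontr : ((4 * p : ℕ) : ZMod 4) = (p : ZMod 4) * 2 := hmod.symm
    rw [show ((4 * p : ℕ) : ZMod 4) = 0 by push_cast; ring_nf; rw [show ((4:ZMod 4)) = 0 from rfl]; ring] at hcontr
    rw [show ((p : ℕ) : ZMod 4) = (((p % 4 : ℕ) : ℕ) : ZMod 4) by rw [ZMod.natCast_mod]] at hcontr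
    rcases hp4 with h4 | h4 <;> rw [h4] at hcontr <;> revert hcontr <;> decide
end

section
/- Let p > 3 be a prime, let w,x,y,z : ZMod p → {−1,1}, let a,b ∈ {τ,ι} be flags and r,s,t ∈ {0,1}, and suppose H = 𝓗(W,X,Y,Z)^{a,b}_{r,s,t} is a Hadamard matrix (W = BC(w), etc.). Then H is Hadamard equivalent to each of 𝓗(Y,Z,W,X)^{a,b}_{r,s,t}, 𝓗(X,W,Z,Y)^{a,b}_{r,s,t}, 𝓗(Z,Y,X,W)^{a,b}_{r,s,t}, and, for any α,β,γ,δ ∈ {−1,1} with α·β·γ·δ = 1, to 𝓗(αW, βX, γY, δZ)^{a,b}_{r,s,t}. -/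
open Matrix

/-- A signed permutation matrix: exactly one nonzero entry (which is ±1) in each
row and each column. -/
def IsSignedPerm {n : Type*} [DecidableEq n] (P : Matrix n n ℤ) : Prop :=
  ∃ (σ : Equiv.Perm n) (ε : n → ℤ), (∀ i, ε i = 1 ∨ ε i = -1) ∧
    P = Matrix.of fun i j => if σ i = j then ε i else 0

/-- Hadamard equivalence of ±1 matrices. -/
def HadEquiv {n : Type*} [Fintype n] [DecidableEq n] (A B : Matrix n n ℤ) : Prop :=
  ∃ P Q : Matrix n n ℤ, IsSignedPerm P ∧ IsSignedPerm Q ∧ A = P * B * Q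

/-- The back-circulant matrix `BC(u)` with entries `u (i + j)`. -/
def BC {p : ℕ} (u : ZMod p → ℤ) : Matrix (ZMod p) (ZMod p) ℤ :=
  Matrix.of fun i j => u (i + j)

/-- The circulant matrix `C(u)` with entries `u (j - i)`. -/
def Cir {p : ℕ} (u : ZMod p → ℤ) : Matrix (ZMod p) (ZMod p) ℤ :=
  Matrix.of fun i j => u (j - i)

/-- A flag `τ` or `ι`. -/
inductive Flg | tau | iota
  deriving DecidableEq

/-- Flg multiplication: `ττ = ιι = τ` and `τι = ιτ = ι`. -/
instance : Mul Flg :=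
  ⟨fun a b => match a, b with
    | .tau, c => c
    | .iota, .tau => .iota
    | .iota, .iota => .tau⟩

/-- `BC(u)^c`: the flag `τ` gives the back-circulant matrix `BC(u)`, the flag `ι`
gives the circulant matrix `C(u)` with the same first row. -/
def flagM {p : ℕ} (c : Flg) (u : ZMod p → ℤ) : Matrix (ZMod p) (ZMod p) ℤ :=
  match c with
  | .tau => BC u
  | .iota => Cir u

/-- The `4p × 4p` block matrix `𝓗(W,X,Y,Z)^{a,b}_{r,s,t}` with `W = BC w`, `X = BC x`,
`Y = BC y`, `Z = BC z` back-circulant `p × p` blocks. -/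
def HBlock {p : ℕ} (w x y z : ZMod p → ℤ) (a b : Flg) (r s t : ℕ) :
    Matrix (Fin 4 × ZMod p) (Fin 4 × ZMod p) ℤ :=
  Matrix.of fun ik jl =>
    (!![BC w, flagM a x, flagM b y, flagM (a * b) z;
        BC x, ((-1 : ℤ) ^ r) • flagM a w, flagM b z, ((-1 : ℤ) ^ r) • flagM (a * b) y;
        BC y, ((-1 : ℤ) ^ t) • flagM a z, ((-1 : ℤ) ^ s) • flagM b w,
          ((-1 : ℤ) ^ (s + t)) • flagM (a * b) x;
        BC z, ((-1 : ℤ) ^ (r + t)) • flagM a y, ((-1 : ℤ) ^ s) • flagM b x,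
          ((-1 : ℤ) ^ (r + s + t)) • flagM (a * b) w] ik.1 jl.1) ik.2 jl.2


section Helpers

variable {p : ℕ}

lemma flagM_smul (c : Flg) (α : ℤ) (u : ZMod p → ℤ) (i j : ZMod p) :
    flagM c (α • u) i j = α * flagM c u i j := by
  cases c <;> simp [flagM, BC, Cir]

lemma BC_smul (α : ℤ) (u : ZMod p → ℤ) (i j : ZMod p) :
    BC (α • u) i j = α * BC u i j := by
  simp [BC]

def SP (σ : Equiv.Perm (Fin 4)) (ε : Fin 4 → ℤ) :
    Matrix (Fin 4 × ZMod p) (Fin 4 × ZMod p) ℤ :=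
  Matrix.of fun i j => if (σ i.1, i.2) = j then ε i.1 else 0

lemma SP_isSignedPerm (σ : Equiv.Perm (Fin 4)) (ε : Fin 4 → ℤ)
    (hε : ∀ i, ε i = 1 ∨ ε i = -1) : IsSignedPerm (SP (p := p) σ ε) :=
  ⟨σ.prodCongr (Equiv.refl _), fun i => ε i.1, fun i => hε i.1, rfl⟩

lemma SP_mul_apply [NeZero p] (σ : Equiv.Perm (Fin 4)) (ε : Fin 4 → ℤ)
    (B : Matrix (Fin 4 × ZMod p) (Fin 4 × ZMod p) ℤ) (i j : Fin 4 × ZMod p) :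
    (SP (p := p) σ ε * B) i j = ε i.1 * B (σ i.1, i.2) j := by
  simp [Matrix.mul_apply, SP, ite_mul]

lemma mul_SP_apply [NeZero p] (η : Fin 4 → ℤ)
    (B : Matrix (Fin 4 × ZMod p) (Fin 4 × ZMod p) ℤ) (i j : Fin 4 × ZMod p) :
    (B * SP (p := p) (Equiv.refl _) η) i j = B i j * η j.1 := by
  simp [Matrix.mul_apply, SP, mul_ite]

lemma hadEquiv_of_SP [NeZero p] (A B : Matrix (Fin 4 × ZMod p) (Fin 4 × ZMod p) ℤ)
    (σ : Equiv.Perm (Fin 4)) (ε η : Fin 4 → ℤ)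
    (hε : ∀ i, ε i = 1 ∨ ε i = -1) (hη : ∀ i, η i = 1 ∨ η i = -1)
    (h : ∀ i k j l, A (i, k) (j, l) = ε i * B (σ i, k) (j, l) * η j) :
    HadEquiv A B := by
  refine ⟨SP σ ε, SP (Equiv.refl _) η, SP_isSignedPerm _ _ hε, SP_isSignedPerm _ _ hη, ?_⟩
  ext ⟨i, k⟩ ⟨j, l⟩
  rw [mul_SP_apply, SP_mul_apply]
  exact h i k j l

def pA : Equiv.Perm (Fin 4) := ⟨![2, 3, 0, 1], ![2, 3, 0, 1], by decide, by decide⟩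
def pB : Equiv.Perm (Fin 4) := ⟨![1, 0, 3, 2], ![1, 0, 3, 2], by decide, by decide⟩
def pC : Equiv.Perm (Fin 4) := ⟨![3, 2, 1, 0], ![3, 2, 1, 0], by decide, by decide⟩

end Helpers

set_option maxHeartbeats 2000000 in
/-- Proposition 4.4(a): if `H = 𝓗(W,X,Y,Z)^{a,b}_{r,s,t}` is a Hadamard
matrix, then `H` is Hadamard equivalent to `𝓗(Y,Z,W,X)`, `𝓗(X,W,Z,Y)`, `𝓗(Z,Y,X,W)`
(same flags and parameters), and to `𝓗(αW,βX,γY,δZ)` for any signs `α,β,γ,δ` with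
`αβγδ = 1`. -/
theorem stmt6 (p : ℕ) [NeZero p] (hp : p.Prime) (hp3 : 3 < p)
    (w x y z : ZMod p → ℤ)
    (hw : ∀ i, w i = 1 ∨ w i = -1) (hx : ∀ i, x i = 1 ∨ x i = -1)
    (hy : ∀ i, y i = 1 ∨ y i = -1) (hz : ∀ i, z i = 1 ∨ z i = -1)
    (a b : Flg) (r s t : ℕ) (hr : r ≤ 1) (hs : s ≤ 1) (ht : t ≤ 1)
    (hHad : _root_.IsHadamard (HBlock w x y z a b r s t)) :
    HadEquiv (HBlock w x y z a b r s t) (HBlock y z w x a b r s t) ∧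
    HadEquiv (HBlock w x y z a b r s t) (HBlock x w z y a b r s t) ∧
    HadEquiv (HBlock w x y z a b r s t) (HBlock z y x w a b r s t) ∧
    ∀ α β γ δ : ℤ, (α = 1 ∨ α = -1) → (β = 1 ∨ β = -1) →
      (γ = 1 ∨ γ = -1) → (δ = 1 ∨ δ = -1) → α * β * γ * δ = 1 →
      HadEquiv (HBlock w x y z a b r s t)
        (HBlock (α • w) (β • x) (γ • y) (δ • z) a b r s t) := by
  refine ⟨?_, ?_, ?_, ?_⟩
  · apply hadEquiv_of_SP _ _ pA (fun _ => 1)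
        ![1, (-1) ^ t, (-1) ^ s, (-1) ^ (s + t)]
    · intro i; left; rfl
    · intro i; fin_cases i
      · left; rfl
      · exact neg_one_pow_eq_or ℤ t
      · exact neg_one_pow_eq_or ℤ s
      · exact neg_one_pow_eq_or ℤ (s + t)
    · intro i k j l
      fin_cases i <;> fin_cases j <;> simp only [HBlock, pA, Matrix.of_apply, Matrix.cons_val', Matrix.cons_val, Matrix.cons_val_zero, Matrix.cons_val_one, Matrix.cons_val_fin_one, Equiv.coe_fn_mk, Fin.reduceFinMk, Fin.isValue] <;>
        simp [HBlock, pA, -zsmul_eq_mul, Matrix.smul_apply, smul_eq_mul, pow_add] <;>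
        (obtain h1 | h1 := neg_one_pow_eq_or ℤ r <;>
         obtain h2 | h2 := neg_one_pow_eq_or ℤ s <;>
         obtain h3 | h3 := neg_one_pow_eq_or ℤ t <;>
         simp only [h1, h2, h3] <;> ring)
  · apply hadEquiv_of_SP _ _ pB (fun _ => 1)
        ![1, (-1) ^ r, 1, (-1) ^ r]
    · intro i; left; rfl
    · intro i; fin_cases i
      · left; rfl
      · exact neg_one_pow_eq_or ℤ r
      · left; rfl
      · exact neg_one_pow_eq_or ℤ r
    · intro i k j l
      fin_cases i <;> fin_cases j <;> simp only [HBlock, pB, Matrix.of_apply, Matrix.cons_val', Matrix.cons_val, Matrix.cons_val_zero, Matrix.cons_val_one, Matrix.cons_val_fin_one, Equiv.coe_fn_mk, Fin.reduceFinMk, Fin.isValue] <;>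
        simp [HBlock, pB, -zsmul_eq_mul, Matrix.smul_apply, smul_eq_mul, pow_add] <;>
        (obtain h1 | h1 := neg_one_pow_eq_or ℤ r <;>
         obtain h2 | h2 := neg_one_pow_eq_or ℤ s <;>
         obtain h3 | h3 := neg_one_pow_eq_or ℤ t <;>
         simp only [h1, h2, h3] <;> ring)
  · apply hadEquiv_of_SP _ _ pC (fun _ => 1)
        ![1, (-1) ^ (r + t), (-1) ^ s, (-1) ^ (r + s + t)]
    · intro i; left; rfl
    · intro i; fin_cases i
      · left; rfl
      · exact neg_one_pow_eq_or ℤ (r + t)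
      · exact neg_one_pow_eq_or ℤ s
      · exact neg_one_pow_eq_or ℤ (r + s + t)
    · intro i k j l
      fin_cases i <;> fin_cases j <;> simp only [HBlock, pC, Matrix.of_apply, Matrix.cons_val', Matrix.cons_val, Matrix.cons_val_zero, Matrix.cons_val_one, Matrix.cons_val_fin_one, Equiv.coe_fn_mk, Fin.reduceFinMk, Fin.isValue] <;>
        simp [HBlock, pC, -zsmul_eq_mul, Matrix.smul_apply, smul_eq_mul, pow_add] <;>
        (obtain h1 | h1 := neg_one_pow_eq_or ℤ r <;>
         obtain h2 | h2 := neg_one_pow_eq_or ℤ s <;>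
         obtain h3 | h3 := neg_one_pow_eq_or ℤ t <;>
         simp only [h1, h2, h3] <;> ring)
  · intro α β γ δ hα hβ hγ hδ hprod
    apply hadEquiv_of_SP _ _ (Equiv.refl _) ![α, β, γ, δ] ![1, α * β, α * γ, α * δ]
    · intro i; fin_cases i
      · exact hα
      · exact hβ
      · exact hγ
      · exact hδ
    · intro i; fin_cases i
      · left; rfl
      · rcases hα with rfl | rfl <;> rcases hβ with rfl | rfl <;> norm_num
      · rcases hα with rfl | rfl <;> rcases hγ with rfl | rfl <;> norm_num
      · rcases hα with rfl | rfl <;> rcases hδ with rfl | rfl <;> norm_num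
    · intro i k j l
      fin_cases i <;> fin_cases j <;> simp only [HBlock, Matrix.of_apply, Matrix.cons_val', Matrix.cons_val, Matrix.cons_val_zero, Matrix.cons_val_one, Matrix.cons_val_fin_one, Equiv.refl_apply, Fin.reduceFinMk, Fin.isValue] <;>
        simp [HBlock, -zsmul_eq_mul, Matrix.smul_apply, smul_eq_mul, flagM_smul,
          BC_smul] <;>
        (rcases hα with rfl | rfl <;> rcases hβ with rfl | rfl <;>
         rcases hγ with rfl | rfl <;> rcases hδ with rfl | rfl <;>
         first
          | ring1
          | (exfalso; norm_num at hprod))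
end

section
/- Let p > 3 be a prime, let w,x,y,z : ZMod p → {−1,1}, let a,b ∈ {τ,ι} be flags, and suppose H = 𝓗(W,X,Y,Z)^{a,b}_{1,1,1} is a Hadamard matrix (W = BC(w), etc.). Then H is Hadamard equivalent to 𝓗(W,Y,Z,X)^{b,ab}_{1,1,1} and to 𝓗(W,Z,X,Y)^{ab,a}_{1,1,1}, and also to 𝓗(−W,Y,X,Z)^{b,a}_{1,1,1} and to 𝓗(−W,Z,Y,X)^{ab,b}_{1,1,1}. -/
open Matrix

lemma hadEquiv_of_entry {n : Type*} [Fintype n] [DecidableEq n]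
    (A B : Matrix n n ℤ) (σ τ : Equiv.Perm n) (ε δ : n → ℤ)
    (hε : ∀ i, ε i = 1 ∨ ε i = -1) (hδ : ∀ i, δ i = 1 ∨ δ i = -1)
    (h : ∀ i j, A i j = ε i * δ j * B (σ i) (τ j)) : HadEquiv A B := by
  refine ⟨Matrix.of fun i j => if σ i = j then ε i else 0,
          Matrix.of fun i j => if τ.symm i = j then δ (τ.symm i) else 0,
          ⟨σ, ε, hε, rfl⟩, ⟨τ.symm, fun i => δ (τ.symm i), fun i => hδ _, rfl⟩, ?_⟩
  ext i j
  rw [h]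
  simp only [Matrix.mul_apply, Matrix.of_apply, ite_mul, zero_mul, mul_ite, mul_zero,
    Finset.sum_ite_eq, Finset.mem_univ, if_true]
  rw [Finset.sum_eq_single (τ j)]
  · simp; ring
  · intro l _ hl
    have hne : τ.symm l ≠ j := fun hc => hl (by rw [← hc, Equiv.apply_symm_apply])
    simp [hne]
  · simp

section HBaux
variable {p : ℕ} (w x y z : ZMod p → ℤ) (a b : Flg) (r s t : ℕ) (k l : ZMod p)

lemma HB00 : HBlock w x y z a b r s t (0, k) (0, l) = BC w k l := rfl
lemma HB01 : HBlock w x y z a b r s t (0, k) (1, l) = flagM a x k l := rfl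
lemma HB02 : HBlock w x y z a b r s t (0, k) (2, l) = flagM b y k l := rfl
lemma HB03 : HBlock w x y z a b r s t (0, k) (3, l) = flagM (a*b) z k l := rfl
lemma HB10 : HBlock w x y z a b r s t (1, k) (0, l) = BC x k l := rfl
lemma HB11 : HBlock w x y z a b r s t (1, k) (1, l) = (-1:ℤ)^r * flagM a w k l := rfl
lemma HB12 : HBlock w x y z a b r s t (1, k) (2, l) = flagM b z k l := rfl
lemma HB13 : HBlock w x y z a b r s t (1, k) (3, l) = (-1:ℤ)^r * flagM (a*b) y k l := rfl
lemma HB20 : HBlock w x y z a b r s t (2, k) (0, l) = BC y k l := rfl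
lemma HB21 : HBlock w x y z a b r s t (2, k) (1, l) = (-1:ℤ)^t * flagM a z k l := rfl
lemma HB22 : HBlock w x y z a b r s t (2, k) (2, l) = (-1:ℤ)^s * flagM b w k l := rfl
lemma HB23 : HBlock w x y z a b r s t (2, k) (3, l) = (-1:ℤ)^(s+t) * flagM (a*b) x k l := rfl
lemma HB30 : HBlock w x y z a b r s t (3, k) (0, l) = BC z k l := rfl
lemma HB31 : HBlock w x y z a b r s t (3, k) (1, l) = (-1:ℤ)^(r+t) * flagM a y k l := rfl
lemma HB32 : HBlock w x y z a b r s t (3, k) (2, l) = (-1:ℤ)^s * flagM b x k l := rfl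
lemma HB33 : HBlock w x y z a b r s t (3, k) (3, l) = (-1:ℤ)^(r+s+t) * flagM (a*b) w k l := rfl

lemma flg1 : b * (a * b) = a := by cases a <;> cases b <;> rfl
lemma flg2 : (a * b) * a = b := by cases a <;> cases b <;> rfl
lemma flg3 : (a * b) * b = a := by cases a <;> cases b <;> rfl
lemma flg4 : b * a = a * b := by cases a <;> cases b <;> rfl
lemma flg5 : a * (a * b) = b := by cases a <;> cases b <;> rfl
lemma flagM_neg (c : Flg) (u : ZMod p → ℤ) : flagM c (-u) k l = -(flagM c u k l) := by
  cases c <;> simp [flagM, BC, Cir]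
lemma BC_neg (u : ZMod p → ℤ) : BC (-u) k l = -(BC u k l) := by simp [BC]

end HBaux

lemma fmk0 (h : 0 < 4) : (⟨0, h⟩ : Fin 4) = 0 := rfl
lemma fmk1 (h : 1 < 4) : (⟨1, h⟩ : Fin 4) = 1 := rfl
lemma fmk2 (h : 2 < 4) : (⟨2, h⟩ : Fin 4) = 2 := rfl
lemma fmk3 (h : 3 < 4) : (⟨3, h⟩ : Fin 4) = 3 := rfl

def permOf (v vinv : Fin 4 → Fin 4) (h1 : Function.LeftInverse vinv v)
    (h2 : Function.RightInverse vinv v) : Equiv.Perm (Fin 4) := ⟨v, vinv, h1, h2⟩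

/-- Proposition 4.4(b), first part: if `H = 𝓗(W,X,Y,Z)^{a,b}_{1,1,1}`
is a Hadamard matrix, then `H` is Hadamard equivalent to `𝓗(W,Y,Z,X)^{b,ab}_{1,1,1}`,
`𝓗(W,Z,X,Y)^{ab,a}_{1,1,1}`, `𝓗(−W,Y,X,Z)^{b,a}_{1,1,1}` and
`𝓗(−W,Z,Y,X)^{ab,b}_{1,1,1}`. -/
theorem stmt7 (p : ℕ) [NeZero p] (hp : p.Prime) (hp3 : 3 < p)
    (w x y z : ZMod p → ℤ)
    (hw : ∀ i, w i = 1 ∨ w i = -1) (hx : ∀ i, x i = 1 ∨ x i = -1)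
    (hy : ∀ i, y i = 1 ∨ y i = -1) (hz : ∀ i, z i = 1 ∨ z i = -1)
    (a b : Flg)
    (hHad : _root_.IsHadamard (HBlock w x y z a b 1 1 1)) :
    HadEquiv (HBlock w x y z a b 1 1 1) (HBlock w y z x b (a * b) 1 1 1) ∧
    HadEquiv (HBlock w x y z a b 1 1 1) (HBlock w z x y (a * b) a 1 1 1) ∧
    HadEquiv (HBlock w x y z a b 1 1 1) (HBlock (-w) y x z b a 1 1 1) ∧
    HadEquiv (HBlock w x y z a b 1 1 1) (HBlock (-w) z y x (a * b) b 1 1 1) := by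
  refine ⟨?_, ?_, ?_, ?_⟩
  · refine hadEquiv_of_entry _ _
      ((permOf ![0,3,1,2] ![0,2,3,1] (by decide) (by decide)).prodCongr (Equiv.refl (ZMod p)))
      ((permOf ![0,3,1,2] ![0,2,3,1] (by decide) (by decide)).prodCongr (Equiv.refl (ZMod p)))
      (fun _ => 1) (fun _ => 1) (fun _ => Or.inl rfl) (fun _ => Or.inl rfl) ?_
    rintro ⟨i, k⟩ ⟨j, l⟩
    fin_cases i <;> fin_cases j <;>
      simp only [Equiv.prodCongr_apply, Equiv.coe_refl, Prod.map_apply, id_eq, permOf,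
        Equiv.coe_fn_mk, Fin.isValue, fmk0, fmk1, fmk2, fmk3,
        show (![0,3,1,2] : Fin 4 → Fin 4) 0 = 0 from rfl,
        show (![0,3,1,2] : Fin 4 → Fin 4) 1 = 3 from rfl,
        show (![0,3,1,2] : Fin 4 → Fin 4) 2 = 1 from rfl,
        show (![0,3,1,2] : Fin 4 → Fin 4) 3 = 2 from rfl,
        HB00, HB01, HB02, HB03, HB10, HB11, HB12, HB13, HB20, HB21, HB22, HB23,
        HB30, HB31, HB32, HB33, flg1, flg2, flg3, flg4, flg5] <;> ring
  · refine hadEquiv_of_entry _ _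
      ((permOf ![0,2,3,1] ![0,3,1,2] (by decide) (by decide)).prodCongr (Equiv.refl (ZMod p)))
      ((permOf ![0,2,3,1] ![0,3,1,2] (by decide) (by decide)).prodCongr (Equiv.refl (ZMod p)))
      (fun _ => 1) (fun _ => 1) (fun _ => Or.inl rfl) (fun _ => Or.inl rfl) ?_
    rintro ⟨i, k⟩ ⟨j, l⟩
    fin_cases i <;> fin_cases j <;>
      simp only [Equiv.prodCongr_apply, Equiv.coe_refl, Prod.map_apply, id_eq, permOf,
        Equiv.coe_fn_mk, Fin.isValue, fmk0, fmk1, fmk2, fmk3,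
        show (![0,2,3,1] : Fin 4 → Fin 4) 0 = 0 from rfl,
        show (![0,2,3,1] : Fin 4 → Fin 4) 1 = 2 from rfl,
        show (![0,2,3,1] : Fin 4 → Fin 4) 2 = 3 from rfl,
        show (![0,2,3,1] : Fin 4 → Fin 4) 3 = 1 from rfl,
        HB00, HB01, HB02, HB03, HB10, HB11, HB12, HB13, HB20, HB21, HB22, HB23,
        HB30, HB31, HB32, HB33, flg1, flg2, flg3, flg4, flg5] <;> ring
  · refine hadEquiv_of_entry _ _
      ((permOf ![0,2,1,3] ![0,2,1,3] (by decide) (by decide)).prodCongr (Equiv.refl (ZMod p)))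
      ((permOf ![0,2,1,3] ![0,2,1,3] (by decide) (by decide)).prodCongr (Equiv.refl (ZMod p)))
      (fun ik => (![1,-1,-1,-1] : Fin 4 → ℤ) ik.1)
      (fun jl => (![-1,1,1,1] : Fin 4 → ℤ) jl.1)
      (by rintro ⟨i, _⟩; fin_cases i <;> simp)
      (by rintro ⟨i, _⟩; fin_cases i <;> simp) ?_
    rintro ⟨i, k⟩ ⟨j, l⟩
    fin_cases i <;> fin_cases j <;>
      simp only [Equiv.prodCongr_apply, Equiv.coe_refl, Prod.map_apply, id_eq, permOf,
        Equiv.coe_fn_mk, Fin.isValue, fmk0, fmk1, fmk2, fmk3,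
        show (![0,2,1,3] : Fin 4 → Fin 4) 0 = 0 from rfl,
        show (![0,2,1,3] : Fin 4 → Fin 4) 1 = 2 from rfl,
        show (![0,2,1,3] : Fin 4 → Fin 4) 2 = 1 from rfl,
        show (![0,2,1,3] : Fin 4 → Fin 4) 3 = 3 from rfl,
        show (![(1:ℤ),-1,-1,-1]) 0 = 1 from rfl, show (![(1:ℤ),-1,-1,-1]) 1 = -1 from rfl,
        show (![(1:ℤ),-1,-1,-1]) 2 = -1 from rfl, show (![(1:ℤ),-1,-1,-1]) 3 = -1 from rfl,
        show (![(-1:ℤ),1,1,1]) 0 = -1 from rfl, show (![(-1:ℤ),1,1,1]) 1 = 1 from rfl,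
        show (![(-1:ℤ),1,1,1]) 2 = 1 from rfl, show (![(-1:ℤ),1,1,1]) 3 = 1 from rfl,
        HB00, HB01, HB02, HB03, HB10, HB11, HB12, HB13, HB20, HB21, HB22, HB23,
        HB30, HB31, HB32, HB33, flg1, flg2, flg3, flg4, flg5, flagM_neg, BC_neg] <;> ring
  · refine hadEquiv_of_entry _ _
      ((permOf ![0,3,2,1] ![0,3,2,1] (by decide) (by decide)).prodCongr (Equiv.refl (ZMod p)))
      ((permOf ![0,3,2,1] ![0,3,2,1] (by decide) (by decide)).prodCongr (Equiv.refl (ZMod p)))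
      (fun ik => (![1,-1,-1,-1] : Fin 4 → ℤ) ik.1)
      (fun jl => (![-1,1,1,1] : Fin 4 → ℤ) jl.1)
      (by rintro ⟨i, _⟩; fin_cases i <;> simp)
      (by rintro ⟨i, _⟩; fin_cases i <;> simp) ?_
    rintro ⟨i, k⟩ ⟨j, l⟩
    fin_cases i <;> fin_cases j <;>
      simp only [Equiv.prodCongr_apply, Equiv.coe_refl, Prod.map_apply, id_eq, permOf,
        Equiv.coe_fn_mk, Fin.isValue, fmk0, fmk1, fmk2, fmk3,
        show (![0,3,2,1] : Fin 4 → Fin 4) 0 = 0 from rfl,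
        show (![0,3,2,1] : Fin 4 → Fin 4) 1 = 3 from rfl,
        show (![0,3,2,1] : Fin 4 → Fin 4) 2 = 2 from rfl,
        show (![0,3,2,1] : Fin 4 → Fin 4) 3 = 1 from rfl,
        show (![(1:ℤ),-1,-1,-1]) 0 = 1 from rfl, show (![(1:ℤ),-1,-1,-1]) 1 = -1 from rfl,
        show (![(1:ℤ),-1,-1,-1]) 2 = -1 from rfl, show (![(1:ℤ),-1,-1,-1]) 3 = -1 from rfl,
        show (![(-1:ℤ),1,1,1]) 0 = -1 from rfl, show (![(-1:ℤ),1,1,1]) 1 = 1 from rfl,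
        show (![(-1:ℤ),1,1,1]) 2 = 1 from rfl, show (![(-1:ℤ),1,1,1]) 3 = 1 from rfl,
        HB00, HB01, HB02, HB03, HB10, HB11, HB12, HB13, HB20, HB21, HB22, HB23,
        HB30, HB31, HB32, HB33, flg1, flg2, flg3, flg4, flg5, flagM_neg, BC_neg] <;> ring
end

section
/- Let p > 3 be a prime, let w,x,y,z : ZMod p → {−1,1}, let a,b ∈ {τ,ι} be flags, and suppose H = 𝓗(W,X,Y,Z)^{a,b}_{1,1,1} is a Hadamard matrix (W = BC(w), etc.). If (a,b) = (τ,τ), then there exist circulant p×p matrices W', X', Y', Z' with entries in {−1,1} such that H is Hadamard equivalent to the Williamson-form block matrix [[W',X',Y',Z'],[X',−W',Z',−Y'],[Y',−Z',−W',X'],[Z',Y',−X',−W']]. If (a,b) ≠ (τ,τ), then there exist circulant p×p matrices W', X', Y', Z' with entries in {−1,1} such that Hᵀ is Hadamard equivalent to the Ito-form block matrix [[W',X',Y',Z'],[X',−W',Z',−Y'],[Y'ᵀ,−Z'ᵀ,−W'ᵀ,X'ᵀ],[Z'ᵀ,Y'ᵀ,−X'ᵀ,−W'ᵀ]]. -/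
open Matrix

/-- The Williamson-form block matrix. -/
def WilForm {p : ℕ} (W X Y Z : Matrix (ZMod p) (ZMod p) ℤ) :
    Matrix (Fin 4 × ZMod p) (Fin 4 × ZMod p) ℤ :=
  Matrix.of fun ik jl =>
    (!![W, X, Y, Z;
        X, -W, Z, -Y;
        Y, -Z, -W, X;
        Z, Y, -X, -W] ik.1 jl.1) ik.2 jl.2

/-- The Ito-form block matrix. -/
def ItoForm {p : ℕ} (W X Y Z : Matrix (ZMod p) (ZMod p) ℤ) :
    Matrix (Fin 4 × ZMod p) (Fin 4 × ZMod p) ℤ :=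
  Matrix.of fun ik jl =>
    (!![W, X, Y, Z;
        X, -W, Z, -Y;
        Yᵀ, -Zᵀ, -Wᵀ, Xᵀ;
        Zᵀ, Yᵀ, -Xᵀ, -Wᵀ] ik.1 jl.1) ik.2 jl.2


section Stmt8Aux

lemma flg_tt : Flg.tau * Flg.tau = Flg.tau := rfl
lemma flg_ti : Flg.tau * Flg.iota = Flg.iota := rfl
lemma flg_it : Flg.iota * Flg.tau = Flg.iota := rfl
lemma flg_ii : Flg.iota * Flg.iota = Flg.tau := rfl

/-- Build a `HadEquiv` from a pointwise description `A i j = ε i * B (σ i) (τ j) * δ j`. -/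
lemma hadEquiv_of_pw {n : Type*} [Fintype n] [DecidableEq n]
    (A B : Matrix n n ℤ) (σ τ : Equiv.Perm n) (ε δ : n → ℤ)
    (hε : ∀ i, ε i = 1 ∨ ε i = -1) (hδ : ∀ i, δ i = 1 ∨ δ i = -1)
    (h : ∀ i j, A i j = ε i * B (σ i) (τ j) * δ j) : HadEquiv A B := by
  refine ⟨Matrix.of fun i k => if σ i = k then ε i else 0,
          Matrix.of fun k j => if τ.symm k = j then δ (τ.symm k) else 0,
          ⟨σ, ε, hε, rfl⟩, ⟨τ.symm, fun i => δ (τ.symm i), fun i => hδ _, rfl⟩, ?_⟩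
  ext i j
  rw [Matrix.mul_assoc, h i j, Matrix.mul_apply]
  simp only [Matrix.of_apply, ite_mul, zero_mul, Finset.sum_ite_eq, Finset.mem_univ, if_true]
  rw [Matrix.mul_apply]
  simp only [Matrix.of_apply, mul_ite, mul_zero, Equiv.symm_apply_eq]
  rw [Finset.sum_ite_eq' Finset.univ (τ j)]
  simp [mul_assoc]

/-- A "shear" permutation of `Fin 4 × ZMod p`: permute the block index and
possibly negate the inner index depending on the (source) block index. -/
def shear {p : ℕ} (f : Equiv.Perm (Fin 4)) (c : Fin 4 → Bool) :
    Equiv.Perm (Fin 4 × ZMod p) where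
  toFun ki := (f ki.1, if c ki.1 then -ki.2 else ki.2)
  invFun ki := (f.symm ki.1, if c (f.symm ki.1) then -ki.2 else ki.2)
  left_inv := by rintro ⟨k, i⟩; by_cases h : c k <;> simp [h]
  right_inv := by rintro ⟨k, i⟩; by_cases h : c (f.symm k) <;> simp [h]

/-- The permutation `(0 ↦ 0, 1 ↦ 2, 2 ↦ 1, 3 ↦ 3)` of `Fin 4`. -/
def pf23 : Equiv.Perm (Fin 4) := ⟨![0, 2, 1, 3], ![0, 2, 1, 3], by decide, by decide⟩

/-- The permutation `(0 ↦ 0, 1 ↦ 2, 2 ↦ 3, 3 ↦ 1)` of `Fin 4`. -/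
def pf231 : Equiv.Perm (Fin 4) := ⟨![0, 2, 3, 1], ![0, 3, 1, 2], by decide, by decide⟩

end Stmt8Aux

set_option maxHeartbeats 4000000 in
/-- Proposition 4.4(b), second part: if `H = 𝓗(W,X,Y,Z)^{a,b}_{1,1,1}`
is Hadamard and `(a,b) = (τ,τ)`, then `H` is Hadamard equivalent to a Williamson-form
matrix with circulant `±1` blocks; if `(a,b) ≠ (τ,τ)`, then `Hᵀ` is Hadamard
equivalent to an Ito-form matrix with circulant `±1` blocks. -/
theorem stmt8 (p : ℕ) [NeZero p] (hp : p.Prime) (hp3 : 3 < p)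
    (w x y z : ZMod p → ℤ)
    (hw : ∀ i, w i = 1 ∨ w i = -1) (hx : ∀ i, x i = 1 ∨ x i = -1)
    (hy : ∀ i, y i = 1 ∨ y i = -1) (hz : ∀ i, z i = 1 ∨ z i = -1)
    (a b : Flg)
    (hHad : _root_.IsHadamard (HBlock w x y z a b 1 1 1)) :
    (a = Flg.tau ∧ b = Flg.tau →
      ∃ w' x' y' z' : ZMod p → ℤ,
        (∀ i, w' i = 1 ∨ w' i = -1) ∧ (∀ i, x' i = 1 ∨ x' i = -1) ∧
        (∀ i, y' i = 1 ∨ y' i = -1) ∧ (∀ i, z' i = 1 ∨ z' i = -1) ∧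
        HadEquiv (HBlock w x y z a b 1 1 1)
          (WilForm (Cir w') (Cir x') (Cir y') (Cir z'))) ∧
    (¬(a = Flg.tau ∧ b = Flg.tau) →
      ∃ w' x' y' z' : ZMod p → ℤ,
        (∀ i, w' i = 1 ∨ w' i = -1) ∧ (∀ i, x' i = 1 ∨ x' i = -1) ∧
        (∀ i, y' i = 1 ∨ y' i = -1) ∧ (∀ i, z' i = 1 ∨ z' i = -1) ∧
        HadEquiv (HBlock w x y z a b 1 1 1)ᵀ
          (ItoForm (Cir w') (Cir x') (Cir y') (Cir z'))) := by
  constructor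
  · rintro ⟨rfl, rfl⟩
    refine ⟨w, x, y, z, hw, hx, hy, hz, ?_⟩
    refine hadEquiv_of_pw _ _ (shear (Equiv.refl _) (fun _ => true)) (Equiv.refl _)
      (fun _ => 1) (fun _ => 1) (fun _ => Or.inl rfl) (fun _ => Or.inl rfl) ?_
    rintro ⟨k, i⟩ ⟨l, j⟩
    fin_cases k <;> fin_cases l <;>
      simp only [HBlock, WilForm, Matrix.of_apply, Matrix.transpose_apply, Fin.reduceFinMk, Fin.isValue,
        Matrix.cons_val, shear, Equiv.coe_fn_mk, Equiv.refl_apply] <;>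
      simp [HBlock, WilForm, BC, Cir, flagM, shear, flg_tt, Equiv.coe_fn_mk] <;>
      first
        | with_reducible rfl
        | (congr 1 <;> ring)
        | (congr 2 <;> ring)
  · intro hab
    cases a <;> cases b
    · exact absurd ⟨rfl, rfl⟩ hab
    · -- (τ, ι)
      refine ⟨w, x, y, fun i => -(z i), hw, hx, hy,
        fun i => (hz i).elim (fun h => Or.inr (by simp [h])) (fun h => Or.inl (by simp [h])),
        ?_⟩
      refine hadEquiv_of_pw _ _ (shear (Equiv.refl _) ![true, true, false, false])
        (Equiv.refl _) (fun ki => ![1, 1, 1, -1] ki.1) (fun lj => ![1, 1, 1, -1] lj.1)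
        (by rintro ⟨k, _⟩; fin_cases k <;> norm_num)
        (by rintro ⟨l, _⟩; fin_cases l <;> norm_num) ?_
      rintro ⟨k, i⟩ ⟨l, j⟩
      fin_cases k <;> fin_cases l <;>
        simp only [HBlock, ItoForm, Matrix.of_apply, Matrix.transpose_apply, Fin.reduceFinMk, Fin.isValue,
          Matrix.cons_val, shear, Equiv.coe_fn_mk, Equiv.refl_apply] <;>
        simp [HBlock, ItoForm, BC, Cir, flagM, shear, flg_ti, Equiv.coe_fn_mk,
          Matrix.transpose_apply] <;>
        first
          | with_reducible rfl
          | (congr 1 <;> ring)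
          | (congr 2 <;> ring)
    · -- (ι, τ)
      refine ⟨w, y, x, z, hw, hy, hx, hz, ?_⟩
      refine hadEquiv_of_pw _ _ (shear pf23 ![true, false, true, false])
        (shear pf23 (fun _ => false)) (fun _ => 1) (fun _ => 1)
        (fun _ => Or.inl rfl) (fun _ => Or.inl rfl) ?_
      rintro ⟨k, i⟩ ⟨l, j⟩
      fin_cases k <;> fin_cases l <;>
        simp only [HBlock, ItoForm, Matrix.of_apply, Matrix.transpose_apply, Fin.reduceFinMk, Fin.isValue,
          Matrix.cons_val, shear, pf23, Equiv.coe_fn_mk, Equiv.refl_apply] <;>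
        simp [HBlock, ItoForm, BC, Cir, flagM, shear, pf23, flg_it, Equiv.coe_fn_mk,
          Matrix.transpose_apply] <;>
        first
          | with_reducible rfl
          | (congr 1 <;> ring)
          | (congr 2 <;> ring)
    · -- (ι, ι)
      refine ⟨w, z, x, fun i => -(y i), hw, hz, hx,
        fun i => (hy i).elim (fun h => Or.inr (by simp [h])) (fun h => Or.inl (by simp [h])),
        ?_⟩
      refine hadEquiv_of_pw _ _ (shear pf231 ![true, false, false, true])
        (shear pf231 (fun _ => false)) (fun ki => ![1, 1, -1, 1] ki.1)
        (fun lj => ![1, 1, -1, 1] lj.1)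
        (by rintro ⟨k, _⟩; fin_cases k <;> norm_num)
        (by rintro ⟨l, _⟩; fin_cases l <;> norm_num) ?_
      rintro ⟨k, i⟩ ⟨l, j⟩
      fin_cases k <;> fin_cases l <;>
        simp only [HBlock, ItoForm, Matrix.of_apply, Matrix.transpose_apply, Fin.reduceFinMk, Fin.isValue,
          Matrix.cons_val, shear, pf231, Equiv.coe_fn_mk, Equiv.refl_apply] <;>
        simp [HBlock, ItoForm, BC, Cir, flagM, shear, pf231, flg_ii, Equiv.coe_fn_mk,
          Matrix.transpose_apply] <;>
        first
          | with_reducible rfl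
          | (congr 1 <;> ring)
          | (congr 2 <;> ring)
end

section
/- Let p > 3 be a prime, let w,x,y,z : ZMod p → {−1,1}, let a,b ∈ {τ,ι} be flags and r,s,t ∈ {0,1}, and suppose H = 𝓗(W,X,Y,Z)^{a,b}_{r,s,t} is a Hadamard matrix (W = BC(w), etc.). Then W·Wᵀ + X·Xᵀ + Y·Yᵀ + Z·Zᵀ = 4p·I_p (independently of the flags a, b and parameters r, s, t). -/
open Matrix

lemma flagM_mul_transpose {p : ℕ} [NeZero p] (c : Flg) (u : ZMod p → ℤ) :
    flagM c u * (flagM c u)ᵀ = BC u * (BC u)ᵀ := by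
  cases c with
  | tau => rfl
  | iota =>
    ext i j
    simp only [flagM, Matrix.mul_apply, Matrix.transpose_apply, Cir, BC, Matrix.of_apply]
    exact Finset.sum_nbij' (fun k => k - i - j) (fun m => m + i + j)
      (by intros; simp) (by intros; simp) (by intro k _; ring_nf)
      (by intro m _; ring_nf)
      (by intro k _; rw [mul_comm]; congr 1 <;> ring_nf)

/-- equation (5.1): if `H = 𝓗(W,X,Y,Z)^{a,b}_{r,s,t}` is a Hadamard
matrix, then `W·Wᵀ + X·Xᵀ + Y·Yᵀ + Z·Zᵀ = 4p·I_p`, independently of the flags `a, b`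
and the parameters `r, s, t`. -/
theorem stmt16 (p : ℕ) [NeZero p] (hp : p.Prime) (hp3 : 3 < p)
    (w x y z : ZMod p → ℤ)
    (hw : ∀ i, w i = 1 ∨ w i = -1) (hx : ∀ i, x i = 1 ∨ x i = -1)
    (hy : ∀ i, y i = 1 ∨ y i = -1) (hz : ∀ i, z i = 1 ∨ z i = -1)
    (a b : Flg) (r s t : ℕ) (hr : r ≤ 1) (hs : s ≤ 1) (ht : t ≤ 1)
    (hHad : _root_.IsHadamard (HBlock w x y z a b r s t)) :
    BC w * (BC w)ᵀ + BC x * (BC x)ᵀ + BC y * (BC y)ᵀ + BC z * (BC z)ᵀ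
      = (4 * (p : ℤ)) • (1 : Matrix (ZMod p) (ZMod p) ℤ) := by
  have hax := flagM_mul_transpose a x
  have hby := flagM_mul_transpose b y
  have habz := flagM_mul_transpose (a * b) z
  have hH := hHad.2
  ext k k'
  have h := congrFun (congrFun hH (0, k)) (0, k')
  simp only [Matrix.mul_apply, Matrix.transpose_apply, Fintype.sum_prod_type,
    Fin.sum_univ_four, HBlock, Matrix.of_apply, Matrix.cons_val', Matrix.cons_val_zero,
    Matrix.cons_val_one, Matrix.head_cons, Matrix.empty_val', Matrix.cons_val_fin_one,
    Matrix.head_fin_const, Matrix.cons_val_two, Matrix.tail_cons, Matrix.cons_val_three,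
    Matrix.smul_apply, Matrix.one_apply, smul_eq_mul, Fintype.card_prod, Fintype.card_fin,
    ZMod.card, Prod.mk.injEq, true_and] at h
  have e1 := congrFun (congrFun hax k) k'
  have e2 := congrFun (congrFun hby k) k'
  have e3 := congrFun (congrFun habz k) k'
  simp only [Matrix.mul_apply, Matrix.transpose_apply] at e1 e2 e3
  simp only [Matrix.add_apply, Matrix.mul_apply, Matrix.transpose_apply, Matrix.smul_apply,
    Matrix.one_apply, smul_eq_mul]
  rw [← e1, ← e2, ← e3]
  rw [h]
  push_cast
  by_cases hkk : k = k' <;> simp [hkk] <;> ring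
end

section
/- Let p > 3 be a prime and let w, x, y, z be nonzero integers satisfying w² + x² + y² + z² = 4p and w·z = x·y. Then either (w² + x² = 2p and y² + z² = 2p) or (w² + y² = 2p and x² + z² = 2p); in particular p ≡ 1 (mod 4). -/
lemma one_le_sq' (a : ℤ) (h : a ≠ 0) : 1 ≤ a ^ 2 := by
  rcases h.lt_or_gt with h' | h' <;> nlinarith

lemma sq8 (b : ℤ) : b ^ 2 % 8 = 0 ∨ b ^ 2 % 8 = 1 ∨ b ^ 2 % 8 = 4 := by
  have h : b ^ 2 % 8 = (b % 8) ^ 2 % 8 := by rw [pow_two, Int.mul_emod, ← pow_two]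
  have h8 : b % 8 = 0 ∨ b % 8 = 1 ∨ b % 8 = 2 ∨ b % 8 = 3 ∨ b % 8 = 4 ∨ b % 8 = 5 ∨
      b % 8 = 6 ∨ b % 8 = 7 := by omega
  rcases h8 with h8 | h8 | h8 | h8 | h8 | h8 | h8 | h8 <;> rw [h8] at h <;> norm_num at h <;> omega

lemma not_four (a b : ℤ) (ha : a ≠ 0) (hb : b ≠ 0) : a ^ 2 + b ^ 2 ≠ 4 := by
  have h1 := sq8 a
  have h2 := sq8 b
  have h3 := one_le_sq' a ha
  have h4 := one_le_sq' b hb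
  intro h
  obtain ⟨A, hA⟩ : ∃ A, a ^ 2 = A := ⟨_, rfl⟩
  obtain ⟨B, hB⟩ : ∃ B, b ^ 2 = B := ⟨_, rfl⟩
  rw [hA] at h1 h3 h
  rw [hB] at h2 h4 h
  omega

lemma mod4of (p : ℕ) (hp2 : p % 2 = 1) (A B : ℤ)
    (hA : A % 8 = 0 ∨ A % 8 = 1 ∨ A % 8 = 4) (hB : B % 8 = 0 ∨ B % 8 = 1 ∨ B % 8 = 4)
    (h : A + B = 2 * (p : ℤ)) : p % 4 = 1 := by omega

lemma core17 (p : ℕ) (hp : p.Prime) (hp3 : 3 < p) (M N : ℤ)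
    (hM2 : 2 ≤ M) (hN2 : 2 ≤ N) (hM4 : M ≠ 4) (hN4 : N ≠ 4)
    (h : M * N = 4 * (p : ℤ)) :
    (M = 2 ∧ N = 2 * (p : ℤ)) ∨ (M = 2 * (p : ℤ) ∧ N = 2) := by
  have hpZ : Prime ((p : ℤ)) := Int.prime_iff_natAbs_prime.mpr (by simpa using hp)
  have hp0 : (0 : ℤ) < (p : ℤ) := by exact_mod_cast hp.pos
  have hdvd : (p : ℤ) ∣ M * N := ⟨4, by linarith⟩
  rcases hpZ.dvd_mul.mp hdvd with ⟨k, hk⟩ | ⟨k, hk⟩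
  · -- p ∣ M
    right
    have hkN : k * N = 4 := by
      have h' : (p : ℤ) * (k * N) = (p : ℤ) * 4 := by rw [← mul_assoc, ← hk]; linarith
      exact mul_left_cancel₀ (by linarith) h'
    have hk1 : 1 ≤ k := by nlinarith
    have hN4' : N ≤ 4 := by nlinarith
    have : N = 2 ∨ N = 3 := by omega
    rcases this with hN | hN
    · have : k = 2 := by rw [hN] at hkN; omega
      subst this
      exact ⟨by rw [hk]; ring, hN⟩
    · rw [hN] at hkN; omega
  · -- p ∣ N
    left
    have hkM : k * M = 4 := by
      have h' : (p : ℤ) * (k * M) = (p : ℤ) * 4 := by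
        rw [← mul_assoc, ← hk]; linarith
      exact mul_left_cancel₀ (by linarith) h'
    have hk1 : 1 ≤ k := by nlinarith
    have hM4' : M ≤ 4 := by nlinarith
    have : M = 2 ∨ M = 3 := by omega
    rcases this with hM | hM
    · have : k = 2 := by rw [hM] at hkM; omega
      subst this
      exact ⟨hM, by rw [hk]; ring⟩
    · rw [hM] at hkM; omega

/-- if `p > 3` is prime and `w, x, y, z` are nonzero integers with
`w² + x² + y² + z² = 4p` and `w·z = x·y`, then either `w² + x² = 2p` and
`y² + z² = 2p`, or `w² + y² = 2p` and `x² + z² = 2p`; in particular `p ≡ 1 (mod 4)`. -/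
theorem stmt17 (p : ℕ) (hp : p.Prime) (hp3 : 3 < p) (w x y z : ℤ)
    (hw : w ≠ 0) (hx : x ≠ 0) (hy : y ≠ 0) (hz : z ≠ 0)
    (hsum : w ^ 2 + x ^ 2 + y ^ 2 + z ^ 2 = 4 * (p : ℤ))
    (hprod : w * z = x * y) :
    ((w ^ 2 + x ^ 2 = 2 * (p : ℤ) ∧ y ^ 2 + z ^ 2 = 2 * (p : ℤ)) ∨
     (w ^ 2 + y ^ 2 = 2 * (p : ℤ) ∧ x ^ 2 + z ^ 2 = 2 * (p : ℤ))) ∧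
    p % 4 = 1 := by
  have hp2 : p % 2 = 1 := by
    rcases hp.eq_two_or_odd with h | h
    · omega
    · exact h
  -- factor out the gcd of w and x
  have hgpos : 0 < Int.gcd w x := Int.gcd_pos_of_ne_zero_left x hw
  obtain ⟨g, hgdef⟩ : ∃ g : ℤ, (Int.gcd w x : ℤ) = g := ⟨_, rfl⟩
  have hg0 : g ≠ 0 := by
    rw [← hgdef]
    exact_mod_cast Nat.pos_iff_ne_zero.mp hgpos
  have hgw : g ∣ w := hgdef ▸ Int.gcd_dvd_left w x
  have hgx : g ∣ x := hgdef ▸ Int.gcd_dvd_right w x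
  obtain ⟨c, hc⟩ := hgw
  obtain ⟨d, hd⟩ := hgx
  have hc' : w / g = c := by rw [hc]; exact Int.mul_ediv_cancel_left c hg0
  have hd' : x / g = d := by rw [hd]; exact Int.mul_ediv_cancel_left d hg0
  have hcd : Int.gcd c d = 1 := by
    have := Int.gcd_div_gcd_div_gcd (i := w) (j := x) hgpos
    rwa [hgdef, hc', hd'] at this
  have hc0 : c ≠ 0 := by rintro rfl; simp at hc; exact hw hc
  have hd0 : d ≠ 0 := by rintro rfl; simp at hd; exact hx hd
  have hcz : c * z = d * y := by
    have h' : g * (c * z) = g * (d * y) := by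
      rw [← mul_assoc, ← mul_assoc, ← hc, ← hd]; exact hprod
    exact mul_left_cancel₀ hg0 h'
  have hcop : IsCoprime d c := by
    rw [Int.isCoprime_iff_gcd_eq_one, Int.gcd_comm]; exact hcd
  have hdz : d ∣ z := hcop.dvd_of_dvd_mul_left ⟨y, by linarith [hcz]⟩
  obtain ⟨b, hb⟩ := hdz
  have hb0 : b ≠ 0 := by rintro rfl; simp at hb; exact hz hb
  have hyeq : y = c * b := by
    have h' : d * y = d * (c * b) := by
      rw [← hcz, hb]; ring
    exact mul_left_cancel₀ hd0 h'
  have key : (g ^ 2 + b ^ 2) * (c ^ 2 + d ^ 2) = 4 * (p : ℤ) := by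
    rw [hc, hd, hyeq, hb] at hsum
    linear_combination hsum
  have hM2 : 2 ≤ g ^ 2 + b ^ 2 := by
    have := one_le_sq' g hg0; have := one_le_sq' b hb0; linarith
  have hN2 : 2 ≤ c ^ 2 + d ^ 2 := by
    have := one_le_sq' c hc0; have := one_le_sq' d hd0; linarith
  rcases core17 p hp hp3 _ _ hM2 hN2 (not_four g b hg0 hb0) (not_four c d hc0 hd0) key
    with ⟨hM, hN⟩ | ⟨hM, hN⟩
  · -- g² + b² = 2, so g² = b² = 1
    have hg1 : g ^ 2 = 1 := by have := one_le_sq' g hg0; have := one_le_sq' b hb0; omega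
    have hb1 : b ^ 2 = 1 := by have := one_le_sq' g hg0; have := one_le_sq' b hb0; omega
    constructor
    · left
      constructor
      · rw [hc, hd]
        calc (g * c) ^ 2 + (g * d) ^ 2 = g ^ 2 * (c ^ 2 + d ^ 2) := by ring
        _ = 2 * (p : ℤ) := by rw [hg1, hN]; ring
      · rw [hyeq, hb]
        calc (c * b) ^ 2 + (d * b) ^ 2 = b ^ 2 * (c ^ 2 + d ^ 2) := by ring
        _ = 2 * (p : ℤ) := by rw [hb1, hN]; ring
    · exact mod4of p hp2 (c ^ 2) (d ^ 2) (sq8 c) (sq8 d) hN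
  · -- c² + d² = 2
    have hc1 : c ^ 2 = 1 := by have := one_le_sq' c hc0; have := one_le_sq' d hd0; omega
    have hd1 : d ^ 2 = 1 := by have := one_le_sq' c hc0; have := one_le_sq' d hd0; omega
    constructor
    · right
      constructor
      · rw [hc, hyeq]
        calc (g * c) ^ 2 + (c * b) ^ 2 = c ^ 2 * (g ^ 2 + b ^ 2) := by ring
        _ = 2 * (p : ℤ) := by rw [hc1, hM]; ring
      · rw [hd, hb]
        calc (g * d) ^ 2 + (d * b) ^ 2 = d ^ 2 * (g ^ 2 + b ^ 2) := by ring
        _ = 2 * (p : ℤ) := by rw [hd1, hM]; ring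
    · exact mod4of p hp2 (g ^ 2) (b ^ 2) (sq8 g) (sq8 b) hM
end
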